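/- arXiv:1907.09539 — 3 statements merged into one kernel-verified Lean document; each statement's English description precedes it below -/
import Mathlib

section
/- Let $v_1,\dots,v_d \in \mathbb{R}^d$ and $w_1,\dots,w_d \in \mathbb{R}^n$ with $\min_i \|w_i\| \geq \delta > 0$, $\max_k \prod_{i\neq k}\|w_i\| \leq \alpha$, and $\sum_{i=1}^d \|v_i - w_i\|^2 \leq r^2$. Then $\prod_{i=1}^d \|v_i\| \leq \alpha\, \exp\left(\frac{\sqrt{d}\,r}{\delta}\right) \max_k \|v_k\|$. -/
open Finset

/-- Bound on the full product of the norms of perturbed vectors in terms of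
the maximal leave-one-out product `α` of the unperturbed norms:
`∏ᵢ ‖vᵢ‖ ≤ α exp(√d ρ / δ) maxₖ ‖vₖ‖`. -/
theorem product_norm_bound (n d : ℕ) (hd : 0 < d)
    (v w : Fin d → EuclideanSpace ℝ (Fin n)) (δ α ρ : ℝ) (hδ : 0 < δ)
    (hw : ∀ i, δ ≤ ‖w i‖)
    (hα : ∀ k, ∏ i ∈ univ.erase k, ‖w i‖ ≤ α)
    (hρ : 0 ≤ ρ) (hr : ∑ i, ‖v i - w i‖ ^ 2 ≤ ρ ^ 2) :
    ∏ i, ‖v i‖ ≤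
      α * Real.exp (Real.sqrt d * ρ / δ) *
        (univ.sup' (univ_nonempty_iff.mpr ⟨⟨0, hd⟩⟩) fun k => ‖v k‖) := by
  set k : Fin d := ⟨0, hd⟩
  have hvk : ‖v k‖ ≤ univ.sup' (univ_nonempty_iff.mpr ⟨⟨0, hd⟩⟩) fun k => ‖v k‖ :=
    Finset.le_sup' (fun k => ‖v k‖) (mem_univ k)
  -- Cauchy–Schwarz: ∑ ‖v i - w i‖ ≤ √d * ρ
  have hsum : ∑ i, ‖v i - w i‖ ≤ Real.sqrt d * ρ := by
    have h1 : (∑ i, ‖v i - w i‖) ^ 2 ≤ (d : ℝ) * ρ ^ 2 := by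
      calc (∑ i, ‖v i - w i‖) ^ 2 ≤ (#(univ : Finset (Fin d)) : ℝ) * ∑ i, ‖v i - w i‖ ^ 2 :=
            sq_sum_le_card_mul_sum_sq
        _ ≤ (d : ℝ) * ρ ^ 2 := by
            rw [card_univ, Fintype.card_fin]
            exact mul_le_mul_of_nonneg_left hr (by positivity)
    have h2 : (0:ℝ) ≤ ∑ i, ‖v i - w i‖ := Finset.sum_nonneg fun i _ => norm_nonneg _
    nlinarith [Real.sq_sqrt (Nat.cast_nonneg d : (0:ℝ) ≤ d), Real.sqrt_nonneg (d:ℝ),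
      mul_nonneg (Real.sqrt_nonneg (d:ℝ)) hρ]
  -- each factor bound
  have hfac : ∀ i, ‖v i‖ ≤ ‖w i‖ * Real.exp (‖v i - w i‖ / δ) := by
    intro i
    have h1 : ‖v i‖ ≤ ‖w i‖ + ‖v i - w i‖ := by
      calc ‖v i‖ = ‖w i + (v i - w i)‖ := by rw [add_sub_cancel]
        _ ≤ ‖w i‖ + ‖v i - w i‖ := norm_add_le _ _
    have h2 : ‖w i‖ + ‖v i - w i‖ ≤ ‖w i‖ * (1 + ‖v i - w i‖ / δ) := by
      rw [mul_add, mul_one]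
      have : ‖v i - w i‖ ≤ ‖w i‖ * (‖v i - w i‖ / δ) := by
        rw [mul_div_assoc', le_div_iff₀ hδ, mul_comm (‖v i - w i‖)]
        exact mul_le_mul_of_nonneg_right (hw i) (norm_nonneg (v i - w i))
      linarith
    have h3 : 1 + ‖v i - w i‖ / δ ≤ Real.exp (‖v i - w i‖ / δ) := by
      have := Real.add_one_le_exp (‖v i - w i‖ / δ); linarith
    calc ‖v i‖ ≤ ‖w i‖ * (1 + ‖v i - w i‖ / δ) := h1.trans h2
      _ ≤ ‖w i‖ * Real.exp (‖v i - w i‖ / δ) :=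
          mul_le_mul_of_nonneg_left h3 (norm_nonneg _)
  have key : ∏ i ∈ univ.erase k, ‖v i‖ ≤ α * Real.exp (Real.sqrt d * ρ / δ) := by
    calc ∏ i ∈ univ.erase k, ‖v i‖
        ≤ ∏ i ∈ univ.erase k, ‖w i‖ * Real.exp (‖v i - w i‖ / δ) :=
          Finset.prod_le_prod (fun i _ => norm_nonneg _) (fun i _ => hfac i)
      _ = (∏ i ∈ univ.erase k, ‖w i‖) * ∏ i ∈ univ.erase k, Real.exp (‖v i - w i‖ / δ) :=
          Finset.prod_mul_distrib
      _ ≤ α * Real.exp (Real.sqrt d * ρ / δ) := by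
          apply mul_le_mul (hα k) _ (Finset.prod_nonneg fun i _ => (Real.exp_pos _).le)
            ((Finset.prod_nonneg fun i _ => norm_nonneg _).trans (hα k))
          rw [← Real.exp_sum]
          apply Real.exp_le_exp.2
          rw [div_eq_mul_inv (Real.sqrt d * ρ)]
          calc ∑ i ∈ univ.erase k, ‖v i - w i‖ / δ
              ≤ ∑ i, ‖v i - w i‖ / δ :=
                Finset.sum_le_sum_of_subset_of_nonneg (Finset.subset_univ _)
                  (fun i _ _ => by positivity)
            _ = (∑ i, ‖v i - w i‖) * δ⁻¹ := by rw [Finset.sum_mul]; simp [div_eq_mul_inv]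
            _ ≤ Real.sqrt d * ρ * δ⁻¹ :=
                mul_le_mul_of_nonneg_right hsum (by positivity)
  calc ∏ i, ‖v i‖ = ‖v k‖ * ∏ i ∈ univ.erase k, ‖v i‖ :=
        (Finset.mul_prod_erase univ _ (mem_univ k)).symm
    _ ≤ (univ.sup' (univ_nonempty_iff.mpr ⟨⟨0, hd⟩⟩) fun k => ‖v k‖) *
          (α * Real.exp (Real.sqrt d * ρ / δ)) :=
        mul_le_mul hvk key (Finset.prod_nonneg fun i _ => norm_nonneg _)
          ((norm_nonneg _).trans hvk)
    _ = α * Real.exp (Real.sqrt d * ρ / δ) *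
          (univ.sup' (univ_nonempty_iff.mpr ⟨⟨0, hd⟩⟩) fun k => ‖v k‖) := by ring
end

section
/- Suppose $\vw = (\vw_1,\dots,\vw_d)$ satisfies $\max_k \prod_{i\neq k}\|\vw_i\| \leq \alpha$ and $\min_i \|\vw_i\| \geq \delta > 0$. Then for every $\vv = (\vv_1,\dots,\vv_d)$ with $\sum_{i=1}^d \|\vv_i - \vw_i\|^2 \leq r^2$, the gradient of the Fourier-domain loss $L(\vv) = \frac{1}{2}\|D(\vv)\|^2$ satisfies $\|\nabla L(\vv)\| \leq n^{d/2}\,\|D(\vv)\|\,\|\vx\|\,\alpha\sqrt{d}\,\exp\left(\frac{\sqrt{d}\,r}{\delta}\right)$. -/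
open Matrix Finset

/-- The unitary `n × n` discrete Fourier transform matrix. -/
noncomputable def dftMatrix (n : ℕ) : Matrix (Fin n) (Fin n) ℂ :=
  Matrix.of fun j k =>
    (1 / Real.sqrt n : ℝ) * Complex.exp (2 * Real.pi * Complex.I * j * k / n)

/-- `D(v) = Fᴴy - n^{d/2} (∏ᵢ diag(Fᴴvᵢ)) Fᴴx`, the Fourier-domain residual. -/
noncomputable def Dres (n d : ℕ) (x y : EuclideanSpace ℝ (Fin n))
    (v : PiLp 2 fun _ : Fin d => EuclideanSpace ℝ (Fin n)) : Fin n → ℂ :=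
  ((dftMatrix n)ᴴ *ᵥ fun j => (y j : ℂ)) -
    (((n : ℝ) ^ ((d : ℝ) / 2) : ℝ) : ℂ) •
      ((List.ofFn fun i : Fin d =>
          Matrix.diagonal ((dftMatrix n)ᴴ *ᵥ fun j => (v i j : ℂ))).prod *ᵥ
        ((dftMatrix n)ᴴ *ᵥ fun j => (x j : ℂ)))

lemma dft_exp_eq (n : ℕ) (j k : Fin n) :
    (2 * Real.pi * Complex.I * j * k / n)
      = ((2 * Real.pi * j * k / n : ℝ) : ℂ) * Complex.I := by
  push_cast
  ring

lemma dft_abs (n : ℕ) (j k : Fin n) :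
    ‖dftMatrix n j k‖ = 1 / Real.sqrt n := by
  have hn : (0:ℝ) < n := by have := j.pos; positivity
  simp only [dftMatrix, Matrix.of_apply, norm_mul, dft_exp_eq,
    Complex.norm_exp_ofReal_mul_I, mul_one, Complex.norm_real, Real.norm_eq_abs]
  rw [abs_of_nonneg (by positivity)]

lemma exp_pow_sum_zero (n : ℕ) (t : ℤ) (ht0 : t ≠ 0) (htlt : |t| < n) :
    ∑ j ∈ Finset.range n, Complex.exp (((2 * Real.pi * t / n : ℝ) : ℂ) * Complex.I) ^ j = 0 := by
  have hn : 0 < n := by exact_mod_cast lt_of_le_of_lt (abs_nonneg t) htlt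
  set ω : ℂ := Complex.exp (((2 * Real.pi * t / n : ℝ) : ℂ) * Complex.I) with hω
  have hω1 : ω ≠ 1 := by
    rw [hω, Ne, Complex.exp_eq_one_iff]
    rintro ⟨k, hk⟩
    have hI : ((2 * Real.pi * t / n : ℝ) : ℂ) = ((k * (2 * Real.pi) : ℝ) : ℂ) := by
      have h2 : ((k : ℂ) * (2 * ↑Real.pi * Complex.I)) = ((k * (2 * Real.pi) : ℝ) : ℂ) * Complex.I := by
        push_cast; ring
      rw [h2] at hk
      exact mul_right_cancel₀ Complex.I_ne_zero hk
    have hR : 2 * Real.pi * t / n = k * (2 * Real.pi) := by exact_mod_cast hI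
    have hpi := Real.pi_ne_zero
    have hn' : (n : ℝ) ≠ 0 := by positivity
    have ht : (t : ℝ) = k * n := by
      field_simp at hR
      have h2 : (2 * Real.pi) * (t : ℝ) = (2 * Real.pi) * ((k : ℝ) * n) := by rw [hR]; ring
      exact mul_left_cancel₀ (by positivity) h2
    have htz : t = k * n := by exact_mod_cast ht
    rcases eq_or_ne k 0 with rfl | hk0
    · simp at htz; exact ht0 htz
    · have : (n : ℤ) ≤ |t| := by
        rw [htz, abs_mul, Int.abs_natCast]
        have h1 : 1 ≤ |k| := Int.one_le_abs hk0
        nlinarith [(by exact_mod_cast hn : (0:ℤ) < (n:ℤ))]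
      omega
  have hωn : ω ^ n = 1 := by
    rw [hω, ← Complex.exp_nat_mul]
    have : (n : ℂ) * (((2 * Real.pi * t / n : ℝ) : ℂ) * Complex.I) = (t : ℂ) * (2 * Real.pi * Complex.I) := by
      have hn' : (n : ℂ) ≠ 0 := by exact_mod_cast hn.ne'
      push_cast
      field_simp
    rw [this]
    exact_mod_cast Complex.exp_int_mul_two_pi_mul_I t
  rw [geom_sum_eq hω1, hωn, sub_self, zero_div]


lemma dft_ortho (n : ℕ) (m m' : Fin n) :
    ∑ j, star (dftMatrix n m j) * dftMatrix n m' j = if m = m' then 1 else 0 := by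
  have hn : 0 < n := m.pos
  have hnR : (0:ℝ) < n := by exact_mod_cast hn
  have key : ∀ j : Fin n, star (dftMatrix n m j) * dftMatrix n m' j
      = (n:ℂ)⁻¹ * Complex.exp (((2 * Real.pi * ((m':ℝ) - (m:ℝ)) / n : ℝ):ℂ) * Complex.I) ^ (j:ℕ) := by
    intro j
    have hconj : (starRingEnd ℂ) (2 * (Real.pi:ℂ) * Complex.I * (m:ℕ) * (j:ℕ) / (n:ℕ))
        = -(2 * (Real.pi:ℂ) * Complex.I * (m:ℕ) * (j:ℕ) / (n:ℕ)) := by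
      simp [map_div₀, Complex.conj_I, map_ofNat]
      ring
    simp only [dftMatrix, Matrix.of_apply, star_mul', Complex.star_def, Complex.conj_ofReal,
      ← Complex.exp_conj, hconj]
    rw [← Complex.exp_nat_mul, mul_mul_mul_comm, ← Complex.ofReal_mul, ← Complex.exp_add]
    have h1 : (1 / Real.sqrt n) * (1 / Real.sqrt n) = (n:ℝ)⁻¹ := by
      rw [div_mul_div_comm, Real.mul_self_sqrt hnR.le, one_mul, one_div]
    rw [h1]
    have hn' : (n:ℂ) ≠ 0 := by exact_mod_cast hn.ne'
    have h2 : -(2 * (Real.pi:ℂ) * Complex.I * (m:ℕ) * (j:ℕ) / (n:ℕ))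
        + 2 * (Real.pi:ℂ) * Complex.I * (m':ℕ) * (j:ℕ) / (n:ℕ)
        = (j:ℕ) * (((2 * Real.pi * ((m':ℝ) - (m:ℝ)) / n : ℝ):ℂ) * Complex.I) := by
      push_cast
      field_simp
      ring
    rw [h2]
    push_cast
    ring
  rw [Finset.sum_congr rfl (fun j _ => key j), ← Finset.mul_sum]
  by_cases h : m = m'
  · subst h
    simp only [sub_self, mul_zero, zero_div, Complex.ofReal_zero, zero_mul, Complex.exp_zero,
      one_pow, Finset.sum_const, Finset.card_univ, Fintype.card_fin, nsmul_eq_mul, mul_one, if_pos rfl]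
    rw [inv_mul_cancel₀ (by exact_mod_cast hn.ne' : (n:ℂ) ≠ 0), if_pos trivial]
  · rw [if_neg h]
    have hsum : ∑ j : Fin n, Complex.exp (((2 * Real.pi * ((m':ℝ) - (m:ℝ)) / n : ℝ):ℂ) * Complex.I) ^ (j:ℕ)
        = ∑ j ∈ Finset.range n, Complex.exp (((2 * Real.pi * (((m':ℤ) - (m:ℤ) : ℤ):ℝ) / n : ℝ):ℂ) * Complex.I) ^ j := by
      rw [Fin.sum_univ_eq_sum_range]
      norm_num
    rw [hsum, exp_pow_sum_zero n ((m':ℤ) - (m:ℤ))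
      (by simp [sub_eq_zero]; exact fun hh => h (by exact Fin.ext (by exact_mod_cast hh.symm)))
      (by have := m.2; have := m'.2; rw [abs_sub_lt_iff]; omega), mul_zero]

lemma Fv_apply (n : ℕ) (u : Fin n → ℝ) (j : Fin n) :
    ((dftMatrix n)ᴴ *ᵥ fun m => (u m : ℂ)) j = ∑ m, star (dftMatrix n m j) * (u m : ℂ) := by
  simp [Matrix.mulVec, dotProduct, Matrix.conjTranspose_apply]

lemma Fv_entry_bound (n : ℕ) (hn : 0 < n) (u : Fin n → ℝ) (j : Fin n) :
    ‖((dftMatrix n)ᴴ *ᵥ fun m => (u m : ℂ)) j‖ ≤ Real.sqrt (∑ m, u m ^ 2) := by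
  have hnR : (0:ℝ) < n := by exact_mod_cast hn
  rw [Fv_apply]
  calc ‖∑ m, star (dftMatrix n m j) * (u m : ℂ)‖
      ≤ ∑ m, ‖star (dftMatrix n m j) * (u m : ℂ)‖ := by
        exact norm_sum_le _ _
    _ = ∑ m, (1 / Real.sqrt n) * |u m| := by
        refine Finset.sum_congr rfl fun m _ => ?_
        simp only [norm_mul, Complex.star_def, Complex.norm_conj, dft_abs,
          Complex.norm_real, Real.norm_eq_abs]
    _ = (1 / Real.sqrt n) * ∑ m, |u m| := by rw [Finset.mul_sum]
    _ ≤ (1 / Real.sqrt n) * (Real.sqrt n * Real.sqrt (∑ m, u m ^ 2)) := by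
        refine mul_le_mul_of_nonneg_left ?_ (by positivity)
        have h1 : (∑ m, |u m|) ^ 2 ≤ (n : ℝ) * ∑ m, u m ^ 2 := by
          have := sq_sum_le_card_mul_sum_sq (s := Finset.univ) (f := fun m => |u m|)
          simpa [sq_abs] using this
        have h2 : (0:ℝ) ≤ ∑ m, |u m| := Finset.sum_nonneg fun m _ => abs_nonneg _
        calc ∑ m, |u m| = Real.sqrt ((∑ m, |u m|)^2) := (Real.sqrt_sq h2).symm
          _ ≤ Real.sqrt ((n : ℝ) * ∑ m, u m ^ 2) := Real.sqrt_le_sqrt h1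
          _ = Real.sqrt n * Real.sqrt (∑ m, u m ^ 2) := Real.sqrt_mul hnR.le _
    _ = Real.sqrt (∑ m, u m ^ 2) := by
        rw [← mul_assoc, one_div, inv_mul_cancel₀ (by positivity), one_mul]

lemma Fv_parseval (n : ℕ) (u : Fin n → ℝ) :
    ∑ j, ‖((dftMatrix n)ᴴ *ᵥ fun m => (u m : ℂ)) j‖ ^ 2 = ∑ m, u m ^ 2 := by
  have key : (((∑ j, ‖((dftMatrix n)ᴴ *ᵥ fun m => (u m : ℂ)) j‖ ^ 2 : ℝ)) : ℂ)
      = ((∑ m, u m ^ 2 : ℝ) : ℂ) := by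
    push_cast
    calc (∑ j, (‖((dftMatrix n)ᴴ *ᵥ fun m => (u m : ℂ)) j‖ : ℂ) ^ 2)
        = ∑ j, (((dftMatrix n)ᴴ *ᵥ fun m => (u m : ℂ)) j) *
            (starRingEnd ℂ) (((dftMatrix n)ᴴ *ᵥ fun m => (u m : ℂ)) j) := by
          refine Finset.sum_congr rfl fun j _ => ?_
          rw [← Complex.ofReal_pow, Complex.sq_norm, Complex.normSq_eq_conj_mul_self]
          ring
      _ = ∑ m, (u m : ℂ) ^ 2 := by
          have expand : ∀ j : Fin n, (((dftMatrix n)ᴴ *ᵥ fun m => (u m : ℂ)) j) *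
              (starRingEnd ℂ) (((dftMatrix n)ᴴ *ᵥ fun m => (u m : ℂ)) j)
              = ∑ m, ∑ m', ((u m : ℂ) * u m') * (star (dftMatrix n m j) * dftMatrix n m' j) := by
            intro j
            rw [Fv_apply, map_sum, Finset.sum_mul_sum]
            refine Finset.sum_congr rfl fun m _ => Finset.sum_congr rfl fun m' _ => ?_
            simp only [_root_.map_mul, Complex.conj_ofReal, Complex.star_def, Complex.conj_conj]
            ring
          rw [Finset.sum_congr rfl (fun j _ => expand j), Finset.sum_comm]
          refine Finset.sum_congr rfl fun m _ => ?_
          rw [Finset.sum_comm]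
          have hinner : ∀ m' : Fin n, (∑ j, ((u m : ℂ) * u m') * (star (dftMatrix n m j) * dftMatrix n m' j))
              = ((u m : ℂ) * u m') * (if m = m' then 1 else 0) := by
            intro m'
            rw [← Finset.mul_sum, dft_ortho]
          rw [Finset.sum_congr rfl (fun m' _ => hinner m')]
          simp [Finset.sum_ite_eq, sq]
  exact_mod_cast key

lemma listprod_diagonal {n d : ℕ} (g : Fin d → Fin n → ℂ) :
    (List.ofFn fun i : Fin d => Matrix.diagonal (g i)).prod
      = Matrix.diagonal (fun j => ∏ i, g i j) := by
  have h1 : (List.ofFn fun i : Fin d => Matrix.diagonal (g i))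
      = List.map (Matrix.diagonalRingHom (Fin n) ℂ) (List.ofFn g) := by
    rw [List.map_ofFn]; rfl
  have h2 : (∏ i, g i) = fun j => ∏ i, g i j := by
    funext j; exact Finset.prod_apply _ _ _
  rw [h1, ← map_list_prod, List.prod_ofFn, h2]
  rfl

lemma Dres_eq (n d : ℕ) (x y : EuclideanSpace ℝ (Fin n))
    (v : PiLp 2 fun _ : Fin d => EuclideanSpace ℝ (Fin n)) (j : Fin n) :
    Dres n d x y v j = ((dftMatrix n)ᴴ *ᵥ fun m => (y m : ℂ)) j
      - (((n : ℝ) ^ ((d : ℝ) / 2) : ℝ) : ℂ) *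
          ((∏ i, ((dftMatrix n)ᴴ *ᵥ fun m => (v i m : ℂ)) j) *
            ((dftMatrix n)ᴴ *ᵥ fun m => (x m : ℂ)) j) := by
  simp only [Dres, Pi.sub_apply, Pi.smul_apply, smul_eq_mul, listprod_diagonal,
    Matrix.mulVec_diagonal]

lemma prod_bound {d : ℕ} (a b t : Fin d → ℝ) (α δ ρ : ℝ) (hδ : 0 < δ) (hρ : 0 ≤ ρ)
    (ha0 : ∀ i, 0 ≤ a i) (ht : ∀ i, 0 ≤ t i) (hab : ∀ i, a i ≤ b i + t i) (hb : ∀ i, δ ≤ b i)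
    (hα : ∀ k, ∏ i ∈ univ.erase k, b i ≤ α)
    (hsum : ∑ i, t i ^ 2 ≤ ρ ^ 2) (i : Fin d) :
    ∏ i' ∈ univ.erase i, a i' ≤ α * Real.exp (Real.sqrt d * ρ / δ) := by
  have hbpos : ∀ i', (0:ℝ) < b i' := fun i' => lt_of_lt_of_le hδ (hb i')
  have ha_le : ∀ i', a i' ≤ b i' * Real.exp (t i' / δ) := by
    intro i'
    have h1 : t i' / δ + 1 ≤ Real.exp (t i' / δ) := Real.add_one_le_exp _
    have h2 : t i' ≤ b i' * (t i' / δ) := by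
      rw [mul_div_assoc']
      rw [le_div_iff₀ hδ]
      nlinarith [ht i', hb i']
    nlinarith [hab i', hbpos i', ht i']
  calc ∏ i' ∈ univ.erase i, a i'
      ≤ ∏ i' ∈ univ.erase i, (b i' * Real.exp (t i' / δ)) := by
        exact Finset.prod_le_prod (fun i' _ => ha0 i') (fun i' _ => ha_le i')
    _ = (∏ i' ∈ univ.erase i, b i') * ∏ i' ∈ univ.erase i, Real.exp (t i' / δ) := by
        rw [Finset.prod_mul_distrib]
    _ = (∏ i' ∈ univ.erase i, b i') * Real.exp (∑ i' ∈ univ.erase i, t i' / δ) := by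
        rw [Real.exp_sum]
    _ ≤ α * Real.exp (Real.sqrt d * ρ / δ) := by
        have hprodpos : 0 < ∏ i' ∈ univ.erase i, b i' := Finset.prod_pos fun i' _ => hbpos i'
        have hαpos : 0 < α := lt_of_lt_of_le hprodpos (hα i)
        refine mul_le_mul (hα i) ?_ (Real.exp_nonneg _) hαpos.le
        rw [Real.exp_le_exp]
        have hsub : ∑ i' ∈ univ.erase i, t i' / δ ≤ ∑ i', t i' / δ := by
          refine Finset.sum_le_sum_of_subset_of_nonneg (Finset.subset_univ _) ?_
          intro i' _ _; exact div_nonneg (ht i') hδ.le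
        refine hsub.trans ?_
        rw [← Finset.sum_div, div_le_div_iff_of_pos_right hδ]  -- name guess
        have hst : (∑ i', t i') ^ 2 ≤ (d : ℝ) * ρ ^ 2 := by
          refine le_trans (sq_sum_le_card_mul_sum_sq) ?_
          simp only [Finset.card_univ, Fintype.card_fin]
          exact mul_le_mul_of_nonneg_left hsum (by positivity)
        have hst0 : 0 ≤ ∑ i', t i' := Finset.sum_nonneg fun i' _ => ht i'
        calc ∑ i', t i' = Real.sqrt ((∑ i', t i')^2) := (Real.sqrt_sq hst0).symm
          _ ≤ Real.sqrt ((d:ℝ) * ρ^2) := Real.sqrt_le_sqrt hst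
          _ = Real.sqrt d * ρ := by
              rw [Real.sqrt_mul (by positivity), Real.sqrt_sq hρ]

abbrev Esp (n d : ℕ) := PiLp 2 fun _ : Fin d => EuclideanSpace ℝ (Fin n)

noncomputable def ellLM (n d : ℕ) (i : Fin d) (j : Fin n) : Esp n d →ₗ[ℝ] ℂ where
  toFun u := ∑ m, star (dftMatrix n m j) * ((u i m : ℝ) : ℂ)
  map_add' u w := by
    simp only [PiLp.add_apply, Complex.ofReal_add, mul_add]
    rw [Finset.sum_add_distrib]
  map_smul' r u := by
    simp only [PiLp.smul_apply, smul_eq_mul, Complex.ofReal_mul, RingHom.id_apply,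
      Complex.real_smul, Finset.mul_sum]
    refine Finset.sum_congr rfl fun m _ => by ring

set_option synthInstance.maxHeartbeats 400000 in
set_option maxHeartbeats 2000000 in
noncomputable def ell (n d : ℕ) (i : Fin d) (j : Fin n) : Esp n d →L[ℝ] ℂ :=
  LinearMap.toContinuousLinearMap (ellLM n d i j)

lemma ell_apply (n d : ℕ) (i : Fin d) (j : Fin n) (u : Esp n d) :
    ell n d i j u = ((dftMatrix n)ᴴ *ᵥ fun m => ((u i m : ℝ) : ℂ)) j := by
  rw [Fv_apply]; rfl

lemma ell_bound (n d : ℕ) (hn : 0 < n) (i : Fin d) (j : Fin n) (u : Esp n d) :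
    ‖ell n d i j u‖ ≤ ‖u i‖ := by
  rw [ell_apply]
  refine (Fv_entry_bound n hn _ j).trans_eq ?_
  rw [EuclideanSpace.norm_eq]
  congr 1
  exact Finset.sum_congr rfl fun m _ => by rw [Real.norm_eq_abs, sq_abs]

set_option synthInstance.maxHeartbeats 400000 in
set_option maxHeartbeats 2000000 in
/-- Lemma 2 of the paper: in a ball of radius `ρ` around an initialization `w`
with `max_k ∏_{i≠k} ‖wᵢ‖ ≤ α` and `minᵢ ‖wᵢ‖ ≥ δ > 0`, the full gradient of
the Fourier-domain loss `L(v) = ½‖D(v)‖²` satisfies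
`‖∇L(v)‖ ≤ n^{d/2} ‖D(v)‖ ‖x‖ α √d exp(√d ρ / δ)`. -/
theorem full_gradient_bound (n d : ℕ) (hn : 0 < n)
    (x y : EuclideanSpace ℝ (Fin n))
    (w v : PiLp 2 fun _ : Fin d => EuclideanSpace ℝ (Fin n))
    (α δ ρ : ℝ) (hδ : 0 < δ) (hρ : 0 ≤ ρ)
    (hα : ∀ k, ∏ i ∈ univ.erase k, ‖w i‖ ≤ α)
    (hδw : ∀ i, δ ≤ ‖w i‖)
    (hball : ∑ i, ‖v i - w i‖ ^ 2 ≤ ρ ^ 2) :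
    ‖gradient (fun u : PiLp 2 fun _ : Fin d => EuclideanSpace ℝ (Fin n) =>
        (1 / 2 : ℝ) * ∑ j, ‖Dres n d x y u j‖ ^ 2) v‖ ≤
      (n : ℝ) ^ ((d : ℝ) / 2) *
        Real.sqrt (∑ j, ‖Dres n d x y v j‖ ^ 2) * ‖x‖ *
        (α * Real.sqrt d * Real.exp (Real.sqrt d * ρ / δ)) := by
  classical
  set s : ℝ := (n : ℝ) ^ ((d : ℝ) / 2) with hs
  have hs0 : 0 ≤ s := Real.rpow_nonneg (Nat.cast_nonneg n) _
  rcases Nat.eq_zero_or_pos d with rfl | hd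
  · -- d = 0 : the function is constant
    have hconst : (fun u : PiLp 2 fun _ : Fin 0 => EuclideanSpace ℝ (Fin n) =>
        (1 / 2 : ℝ) * ∑ j, ‖Dres n 0 x y u j‖ ^ 2)
        = fun _ => (1 / 2 : ℝ) * ∑ j, ‖Dres n 0 x y v j‖ ^ 2 := by
      funext u
      simp [Dres]
    rw [hconst, gradient_fun_const]
    simp [norm_zero]
  -- main case d > 0
  set z : Fin n → ℂ := (dftMatrix n)ᴴ *ᵥ (fun m => ((x m : ℝ) : ℂ)) with hz
  set c : Fin n → ℂ := (dftMatrix n)ᴴ *ᵥ (fun m => ((y m : ℝ) : ℂ)) with hc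
  set D : Fin n → Esp n d → ℂ := fun j u => c j - ((s : ℂ) * z j) * ∏ i, ell n d i j u with hD
  have hDres : ∀ (u : Esp n d) (j : Fin n), Dres n d x y u j = D j u := by
    intro u j
    rw [Dres_eq, hD]
    simp only [ell_apply]
    ring
  set P' : Fin n → (Esp n d →L[ℝ] ℂ) :=
    fun j => ∑ i, (∏ i' ∈ univ.erase i, ell n d i' j v) • ell n d i j with hP'
  have hP : ∀ j, HasFDerivAt (fun u => ∏ i, ell n d i j u) (P' j) v := fun j =>
    HasFDerivAt.finset_prod (fun i _ => (ell n d i j).hasFDerivAt)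
  set D' : Fin n → (Esp n d →L[ℝ] ℂ) := fun j => -(((s : ℂ) * z j) • P' j) with hD'
  have hDder : ∀ j, HasFDerivAt (D j) (D' j) v := fun j =>
    ((hP j).const_mul _).const_sub _
  set Φ : Esp n d →L[ℝ] ℝ := (1/2 : ℝ) •
    ∑ j, ((fderivInnerCLM ℝ (D j v, D j v)).comp ((D' j).prod (D' j))) with hΦdef
  have hfeq : (fun u : Esp n d => (1 / 2 : ℝ) * ∑ j, ‖Dres n d x y u j‖ ^ 2)
      = fun u => (1 / 2 : ℝ) * ∑ j, (inner ℝ (D j u) (D j u) : ℝ) := by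
    funext u
    congr 1
    refine Finset.sum_congr rfl fun j _ => ?_
    rw [hDres u j, real_inner_self_eq_norm_sq]
  have hΦ : HasFDerivAt (fun u : Esp n d =>
      (1 / 2 : ℝ) * ∑ j, ‖Dres n d x y u j‖ ^ 2) Φ v := by
    rw [hfeq, hΦdef]
    exact (HasFDerivAt.fun_sum fun j _ => (hDder j).inner ℝ (hDder j)).const_mul _
  set Dn : ℝ := Real.sqrt (∑ j, ‖Dres n d x y v j‖ ^ 2) with hDn
  set B : ℝ := α * Real.exp (Real.sqrt d * ρ / δ) with hBdef
  have hab : ∀ i, ‖v i‖ ≤ ‖w i‖ + ‖v i - w i‖ := by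
    intro i
    have h1 : w i + (v i - w i) = v i := by abel
    have h2 := norm_add_le (w i) (v i - w i)
    rwa [h1] at h2
  have hB : ∀ (i : Fin d) (j : Fin n),
      ∏ i' ∈ univ.erase i, ‖ell n d i' j v‖ ≤ B := by
    intro i j
    calc ∏ i' ∈ univ.erase i, ‖ell n d i' j v‖
        ≤ ∏ i' ∈ univ.erase i, ‖v i'‖ :=
          Finset.prod_le_prod (fun _ _ => norm_nonneg _)
            (fun i' _ => ell_bound n d hn i' j v)
      _ ≤ B := prod_bound (fun i' => ‖v i'‖) (fun i' => ‖w i'‖) (fun i' => ‖v i' - w i'‖)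
          α δ ρ hδ hρ (fun _ => norm_nonneg _) (fun _ => norm_nonneg _) hab hδw hα hball i
  have hB0 : 0 ≤ B := le_trans
    (Finset.prod_nonneg fun i' _ => norm_nonneg _) (hB ⟨0, hd⟩ ⟨0, hn⟩)
  have hzx : Real.sqrt (∑ j, ‖z j‖ ^ 2) = ‖x‖ := by
    rw [hz]
    rw [Fv_parseval n (fun m => x m)]
    rw [EuclideanSpace.norm_eq]
    congr 1
    exact Finset.sum_congr rfl fun m _ => by rw [Real.norm_eq_abs, sq_abs]
  have hDnorm : ∀ j, ‖D j v‖ = ‖Dres n d x y v j‖ := by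
    intro j
    rw [hDres v j]
  have e2 : ∑ j, ‖Dres n d x y v j‖ * ‖z j‖ ≤ Dn * ‖x‖ := by
    have hsq := Finset.sum_mul_sq_le_sq_mul_sq univ
      (fun j => ‖Dres n d x y v j‖) (fun j => ‖z j‖)
    have h0 : 0 ≤ ∑ j, ‖Dres n d x y v j‖ * ‖z j‖ :=
      Finset.sum_nonneg fun j _ => mul_nonneg (norm_nonneg _) (norm_nonneg _)
    calc ∑ j, ‖Dres n d x y v j‖ * ‖z j‖
        = Real.sqrt ((∑ j, ‖Dres n d x y v j‖ * ‖z j‖) ^ 2) :=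
          (Real.sqrt_sq h0).symm
      _ ≤ Real.sqrt ((∑ j, ‖Dres n d x y v j‖ ^ 2) * ∑ j, ‖z j‖ ^ 2) :=
          Real.sqrt_le_sqrt hsq
      _ = Dn * ‖x‖ := by
          rw [Real.sqrt_mul (Finset.sum_nonneg fun j _ => by positivity), hzx]
  have hΦapp : ∀ h : Esp n d, Φ h = ∑ j, (inner ℝ (D j v) (D' j h) : ℝ) := by
    intro h
    rw [hΦdef]
    simp only [ContinuousLinearMap.smul_apply, ContinuousLinearMap.coe_sum',
      Finset.sum_apply, ContinuousLinearMap.comp_apply, ContinuousLinearMap.prod_apply,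
      fderivInnerCLM_apply, smul_eq_mul]
    rw [Finset.mul_sum]
    refine Finset.sum_congr rfl fun j _ => ?_
    rw [real_inner_comm (D' j h) (D j v)]
    ring
  have hD'bound : ∀ (j : Fin n) (h : Esp n d),
      ‖D' j h‖ ≤ s * ‖z j‖ * (B * ∑ i, ‖h i‖) := by
    intro j h
    have happ : D' j h = -(((s : ℂ) * z j) * (P' j h)) := by
      rw [hD']
      simp [ContinuousLinearMap.neg_apply, ContinuousLinearMap.smul_apply, smul_eq_mul]
    rw [happ, norm_neg, norm_mul, norm_mul,
      Complex.norm_real, Real.norm_eq_abs, abs_of_nonneg hs0]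
    refine mul_le_mul_of_nonneg_left ?_ (mul_nonneg hs0 (norm_nonneg _))
    -- abs (P' j h) ≤ B * ∑ i, ‖h i‖
    have hPapp : P' j h = ∑ i, (∏ i' ∈ univ.erase i, ell n d i' j v) * ell n d i j h := by
      rw [hP']
      simp [ContinuousLinearMap.coe_sum', Finset.sum_apply,
        ContinuousLinearMap.smul_apply, smul_eq_mul]
    rw [hPapp]
    calc ‖∑ i, (∏ i' ∈ univ.erase i, ell n d i' j v) * ell n d i j h‖
        ≤ ∑ i, ‖(∏ i' ∈ univ.erase i, ell n d i' j v) * ell n d i j h‖ :=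
          norm_sum_le _ _
      _ = ∑ i, (∏ i' ∈ univ.erase i, ‖ell n d i' j v‖) *
            ‖ell n d i j h‖ := by
          refine Finset.sum_congr rfl fun i _ => ?_
          rw [norm_mul, norm_prod]
      _ ≤ ∑ i, B * ‖h i‖ := by
          refine Finset.sum_le_sum fun i _ => ?_
          exact mul_le_mul (hB i j) (ell_bound n d hn i j h) (norm_nonneg _) hB0
      _ = B * ∑ i, ‖h i‖ := by rw [Finset.mul_sum]
  have hC0 : 0 ≤ s * Dn * ‖x‖ * (B * Real.sqrt d) := by
    have : (0:ℝ) ≤ Dn := Real.sqrt_nonneg _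
    have hBd : 0 ≤ B * Real.sqrt d := mul_nonneg hB0 (Real.sqrt_nonneg _)
    positivity
  have hΦnorm : ‖Φ‖ ≤ s * Dn * ‖x‖ * (B * Real.sqrt d) := by
    refine ContinuousLinearMap.opNorm_le_bound Φ hC0 fun h => ?_
    have e1 : ∑ i, ‖h i‖ ≤ Real.sqrt d * ‖h‖ := by
      have hsq : (∑ i, ‖h i‖) ^ 2 ≤ (d : ℝ) * ∑ i, ‖h i‖ ^ 2 := by
        have := sq_sum_le_card_mul_sum_sq (s := (univ : Finset (Fin d)))
          (f := fun i => ‖h i‖)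
        simpa using this
      have hn2 : ∑ i, ‖h i‖ ^ 2 = ‖h‖ ^ 2 := (PiLp.norm_sq_eq_of_L2 _ h).symm
      have h0 : 0 ≤ ∑ i, ‖h i‖ := Finset.sum_nonneg fun i _ => norm_nonneg _
      calc ∑ i, ‖h i‖ = Real.sqrt ((∑ i, ‖h i‖) ^ 2) := (Real.sqrt_sq h0).symm
        _ ≤ Real.sqrt ((d : ℝ) * ‖h‖ ^ 2) := by
            refine Real.sqrt_le_sqrt ?_
            rw [← hn2]; exact hsq
        _ = Real.sqrt d * ‖h‖ := by
            rw [Real.sqrt_mul (by positivity), Real.sqrt_sq (norm_nonneg _)]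
    have h0sum : 0 ≤ ∑ i, ‖h i‖ := Finset.sum_nonneg fun i _ => norm_nonneg _
    calc ‖Φ h‖ = |∑ j, (inner ℝ (D j v) (D' j h) : ℝ)| := by
          rw [hΦapp h, Real.norm_eq_abs]
      _ ≤ ∑ j, |(inner ℝ (D j v) (D' j h) : ℝ)| := Finset.abs_sum_le_sum_abs _ _
      _ ≤ ∑ j, ‖D j v‖ * ‖D' j h‖ :=
          Finset.sum_le_sum fun j _ => abs_real_inner_le_norm _ _
      _ ≤ ∑ j, ‖Dres n d x y v j‖ *
            (s * ‖z j‖ * (B * ∑ i, ‖h i‖)) := by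
          refine Finset.sum_le_sum fun j _ => ?_
          rw [hDnorm j]
          exact mul_le_mul_of_nonneg_left (hD'bound j h) (norm_nonneg _)
      _ = s * (B * ∑ i, ‖h i‖) *
            ∑ j, ‖Dres n d x y v j‖ * ‖z j‖ := by
          rw [mul_comm (s * (B * ∑ i, ‖h i‖)), Finset.sum_mul]
          exact Finset.sum_congr rfl fun j _ => by ring
      _ ≤ s * (B * (Real.sqrt d * ‖h‖)) * (Dn * ‖x‖) := by
          refine mul_le_mul ?_ e2 ?_ ?_
          · exact mul_le_mul_of_nonneg_left
              (mul_le_mul_of_nonneg_left e1 hB0) hs0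
          · exact Finset.sum_nonneg fun j _ =>
              mul_nonneg (norm_nonneg _) (norm_nonneg _)
          · exact mul_nonneg hs0 (mul_nonneg hB0
              (mul_nonneg (Real.sqrt_nonneg _) (norm_nonneg _)))
      _ = s * Dn * ‖x‖ * (B * Real.sqrt d) * ‖h‖ := by ring
  have hkey : ‖gradient (fun u : PiLp 2 fun _ : Fin d => EuclideanSpace ℝ (Fin n) =>
      (1 / 2 : ℝ) * ∑ j, ‖Dres n d x y u j‖ ^ 2) v‖ = ‖Φ‖ := by
    have e1 : gradient (fun u : PiLp 2 fun _ : Fin d => EuclideanSpace ℝ (Fin n) =>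
        (1 / 2 : ℝ) * ∑ j, ‖Dres n d x y u j‖ ^ 2) v
        = (InnerProductSpace.toDual ℝ (Esp n d)).symm
            (fderiv ℝ (fun u : Esp n d =>
              (1 / 2 : ℝ) * ∑ j, ‖Dres n d x y u j‖ ^ 2) v) := rfl
    rw [e1, hΦ.fderiv, LinearIsometryEquiv.norm_map]
  rw [hkey]
  refine hΦnorm.trans (le_of_eq ?_)
  rw [hBdef]
  ring
end

section
/- Let $\vx, \vy \in \mathbb{R}^n$, and suppose there is an index $t$ such that $|\vf_t^H \vy| - n^{d/2}|\vf_t^H \vx| \geq \tau > 0$, where $\vf_t$ is the $t$-th column of the unitary DFT. Then for all $\vv = (\vv_1,\dots,\vv_d)$ with $\prod_{i=1}^d \|\vv_i\| \leq n^{-d/2}$, the loss satisfies $L(\vv) = \frac{1}{2}\sum_{j=1}^n \left|\vf_j^H\vy - n^{d/2}\left(\prod_{i=1}^d \vf_j^H\vv_i\right)\vf_j^H\vx\right|^2 \geq \frac{\tau^2}{2}$. -/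
open Matrix Finset

/-- `fⱼᴴ v`: the inner product of the `j`-th column of the unitary DFT matrix
with a complex vector `v`. -/
noncomputable def dftCoeff (n : ℕ) (j : Fin n) (v : Fin n → ℂ) : ℂ :=
  star (fun k => dftMatrix n k j) ⬝ᵥ v

lemma abs_dftMatrix (n : ℕ) (k j : Fin n) :
    ‖dftMatrix n k j‖ = 1 / Real.sqrt n := by
  have h : (2 * (Real.pi : ℂ) * Complex.I * (k : ℂ) * (j : ℂ) / (n : ℂ)) =
      ((2 * Real.pi * k * j / n : ℝ) : ℂ) * Complex.I := by
    push_cast; ring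
  rw [dftMatrix, Matrix.of_apply, norm_mul, h, Complex.norm_exp_ofReal_mul_I,
    mul_one, Complex.norm_real, Real.norm_eq_abs, abs_of_nonneg]
  positivity

lemma abs_dftCoeff_le (n : ℕ) (hn : 0 < n) (j : Fin n)
    (w : EuclideanSpace ℝ (Fin n)) :
    ‖dftCoeff n j fun k => (w k : ℂ)‖ ≤ ‖w‖ := by
  set f : EuclideanSpace ℂ (Fin n) := WithLp.toLp 2 (fun k => dftMatrix n k j) with hf
  set w' : EuclideanSpace ℂ (Fin n) := WithLp.toLp 2 (fun k => (w k : ℂ)) with hw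
  have heq : dftCoeff n j (fun k => (w k : ℂ)) = inner (𝕜 := ℂ) f w' := by
    simp [dftCoeff, dotProduct, PiLp.inner_apply, RCLike.inner_apply, f, w',
      mul_comm]
  have hfn : ‖f‖ = 1 := by
    rw [EuclideanSpace.norm_eq]
    have : ∀ k : Fin n, ‖f k‖ = 1 / Real.sqrt n := fun k => abs_dftMatrix n k j
    simp only [this]
    rw [Finset.sum_const, Finset.card_univ, Fintype.card_fin, nsmul_eq_mul]
    rw [div_pow, one_pow, Real.sq_sqrt (by positivity)]
    rw [mul_one_div, div_self (by positivity), Real.sqrt_one]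
  have hwn : ‖w'‖ = ‖w‖ := by
    rw [EuclideanSpace.norm_eq, EuclideanSpace.norm_eq]
    congr 1
    apply Finset.sum_congr rfl
    intro k _
    simp [w', Complex.norm_real]
  calc ‖dftCoeff n j fun k => (w k : ℂ)‖
      = ‖inner (𝕜 := ℂ) f w'‖ := by rw [heq]
    _ ≤ ‖f‖ * ‖w'‖ := norm_inner_le_norm f w'
    _ = ‖w‖ := by rw [hfn, hwn, one_mul]

/-- If some Fourier coefficient of the target dominates that of the input by
`τ`, then the Fourier-domain loss is at least `τ²/2` whenever the product of
the filter norms is at most `n^{-d/2}`. -/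
theorem loss_bounded_away_from_zero (n d : ℕ) (hn : 0 < n)
    (x y : EuclideanSpace ℝ (Fin n)) (τ : ℝ) (hτ : 0 < τ) (t : Fin n)
    (ht : τ ≤ ‖(dftCoeff n t fun k => (y k : ℂ))‖ -
      (n : ℝ) ^ ((d : ℝ) / 2) * ‖(dftCoeff n t fun k => (x k : ℂ))‖)
    (v : Fin d → EuclideanSpace ℝ (Fin n))
    (hv : ∏ i, ‖v i‖ ≤ (n : ℝ) ^ (-(d : ℝ) / 2)) :
    τ ^ 2 / 2 ≤
      (1 / 2 : ℝ) * ∑ j, ‖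
        (dftCoeff n j (fun k => (y k : ℂ)) -
          (((n : ℝ) ^ ((d : ℝ) / 2) : ℝ) : ℂ) *
            (∏ i, dftCoeff n j fun k => (v i k : ℂ)) *
            dftCoeff n j (fun k => (x k : ℂ)))‖ ^ 2 := by
  set F : Fin n → ℝ := fun j => ‖
        (dftCoeff n j (fun k => (y k : ℂ)) -
          (((n : ℝ) ^ ((d : ℝ) / 2) : ℝ) : ℂ) *
            (∏ i, dftCoeff n j fun k => (v i k : ℂ)) *
            dftCoeff n j (fun k => (x k : ℂ)))‖ ^ 2 with hF
  have hn1 : (1 : ℝ) ≤ (n : ℝ) ^ ((d : ℝ) / 2) := by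
    apply Real.one_le_rpow (by exact_mod_cast hn) (by positivity)
  -- bound on the product of coefficients
  have hprod : ‖(∏ i, dftCoeff n t fun k => (v i k : ℂ))‖ ≤
      (n : ℝ) ^ (-(d : ℝ) / 2) := by
    rw [norm_prod]
    refine le_trans (Finset.prod_le_prod (fun i _ => by positivity)
      (fun i _ => abs_dftCoeff_le n hn t (v i))) hv
  have key : τ ≤ ‖
        (dftCoeff n t (fun k => (y k : ℂ)) -
          (((n : ℝ) ^ ((d : ℝ) / 2) : ℝ) : ℂ) *
            (∏ i, dftCoeff n t fun k => (v i k : ℂ)) *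
            dftCoeff n t (fun k => (x k : ℂ)))‖ := by
    have h1 : ‖(dftCoeff n t fun k => (y k : ℂ))‖ -
        ‖((((n : ℝ) ^ ((d : ℝ) / 2) : ℝ) : ℂ) *
            (∏ i, dftCoeff n t fun k => (v i k : ℂ)) *
            dftCoeff n t (fun k => (x k : ℂ)))‖ ≤
        ‖(dftCoeff n t (fun k => (y k : ℂ)) -
          (((n : ℝ) ^ ((d : ℝ) / 2) : ℝ) : ℂ) *
            (∏ i, dftCoeff n t fun k => (v i k : ℂ)) *
            dftCoeff n t (fun k => (x k : ℂ)))‖ := by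
      simpa using norm_sub_norm_le
        (dftCoeff n t (fun k => (y k : ℂ)))
        ((((n : ℝ) ^ ((d : ℝ) / 2) : ℝ) : ℂ) *
            (∏ i, dftCoeff n t fun k => (v i k : ℂ)) *
            dftCoeff n t (fun k => (x k : ℂ)))
    refine le_trans ?_ h1
    rw [norm_mul, norm_mul, Complex.norm_real, Real.norm_eq_abs,
      abs_of_nonneg (by positivity : (0:ℝ) ≤ (n : ℝ) ^ ((d : ℝ) / 2))]
    have h2 : (n : ℝ) ^ ((d : ℝ) / 2) *
        ‖(∏ i, dftCoeff n t fun k => (v i k : ℂ))‖ *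
        ‖(dftCoeff n t fun k => (x k : ℂ))‖ ≤
        (n : ℝ) ^ ((d : ℝ) / 2) * ‖(dftCoeff n t fun k => (x k : ℂ))‖ := by
      have h3 : (n : ℝ) ^ ((d : ℝ) / 2) *
          ‖(∏ i, dftCoeff n t fun k => (v i k : ℂ))‖ ≤ 1 := by
        calc (n : ℝ) ^ ((d : ℝ) / 2) *
            ‖(∏ i, dftCoeff n t fun k => (v i k : ℂ))‖
            ≤ (n : ℝ) ^ ((d : ℝ) / 2) * (n : ℝ) ^ (-(d : ℝ) / 2) := by
              apply mul_le_mul_of_nonneg_left hprod (by positivity)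
          _ = 1 := by
              rw [← Real.rpow_add (by exact_mod_cast hn)]
              have h0 : (d:ℝ)/2 + -(d:ℝ)/2 = 0 := by ring
              rw [h0, Real.rpow_zero]
      calc (n : ℝ) ^ ((d : ℝ) / 2) *
          ‖(∏ i, dftCoeff n t fun k => (v i k : ℂ))‖ *
          ‖(dftCoeff n t fun k => (x k : ℂ))‖
          ≤ 1 * ‖(dftCoeff n t fun k => (x k : ℂ))‖ := by
            apply mul_le_mul_of_nonneg_right h3 (by positivity)
        _ = ‖(dftCoeff n t fun k => (x k : ℂ))‖ := one_mul _
        _ ≤ (n : ℝ) ^ ((d : ℝ) / 2) *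
            ‖(dftCoeff n t fun k => (x k : ℂ))‖ := by
            nlinarith [norm_nonneg
              (dftCoeff n t fun k => (x k : ℂ))]
    linarith
  have hsq : τ ^ 2 ≤ F t := by
    rw [hF]
    exact pow_le_pow_left₀ hτ.le key 2
  have hsum : F t ≤ ∑ j, F j :=
    Finset.single_le_sum (fun j _ => by positivity) (Finset.mem_univ t)
  calc τ ^ 2 / 2 ≤ F t / 2 := by linarith
    _ ≤ (∑ j, F j) / 2 := by linarith
    _ = (1 / 2 : ℝ) * ∑ j, F j := by ring
end
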